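/- Let 2ℓ ∈ ℤ≥0 and ε₁, ε₂ ∈ {+1,−1}. Then for all z₁, z₂, η ∈ ℂ: θ₁(z₁ + ε₁ε₂ z₂ − 2ε₁ℓη | τ) · φ_ℓ(z₁+ε₁η, z₂+ε₂η) = θ₁(z₁ + ε₁ε₂ z₂ + 2ε₁(ℓ+1)η | τ) · φ_ℓ(z₁, z₂). -/

import Mathlib

/-- Jacobi theta function `θ_a(z|τ)` for `a = 1,2,3,4`. -/
noncomputable def jTheta (a : ℕ) (z τ : ℂ) : ℂ :=
  match a with
  | 1 => -∑' k : ℤ, Complex.exp ((Real.pi : ℂ) * Complex.I * τ * ((k : ℂ) + 1/2)^2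
          + 2 * (Real.pi : ℂ) * Complex.I * (z + 1/2) * ((k : ℂ) + 1/2))
  | 2 => ∑' k : ℤ, Complex.exp ((Real.pi : ℂ) * Complex.I * τ * ((k : ℂ) + 1/2)^2
          + 2 * (Real.pi : ℂ) * Complex.I * z * ((k : ℂ) + 1/2))
  | 3 => ∑' k : ℤ, Complex.exp ((Real.pi : ℂ) * Complex.I * τ * (k : ℂ)^2
          + 2 * (Real.pi : ℂ) * Complex.I * z * (k : ℂ))
  | 4 => ∑' k : ℤ, Complex.exp ((Real.pi : ℂ) * Complex.I * τ * (k : ℂ)^2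
          + 2 * (Real.pi : ℂ) * Complex.I * (z + 1/2) * (k : ℂ))
  | _ => 0

/-- `Φ_ℓ(z) = ∏_{j=0}^{2ℓ} θ₁(z + 2(j−ℓ)η|τ)`, written with `n = 2ℓ ∈ ℤ≥0`. -/
noncomputable def PhiFun (τ η : ℂ) (n : ℕ) (z : ℂ) : ℂ :=
  ∏ j ∈ Finset.range (n+1), jTheta 1 (z + (2*(j : ℂ) - (n : ℂ))*η) τ

/-- `φ_ℓ(z₁,z₂) = Φ_ℓ(z₁−z₂)·Φ_ℓ(z₁+z₂)`, with `n = 2ℓ`. -/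
noncomputable def phiFun (τ η : ℂ) (n : ℕ) (z₁ z₂ : ℂ) : ℂ :=
  PhiFun τ η n (z₁ - z₂) * PhiFun τ η n (z₁ + z₂)

/-- Local commutation rule: for `2ℓ = n ∈ ℤ≥0` and `ε₁, ε₂ ∈ {±1}`,
`θ₁(z₁+ε₁ε₂z₂−2ε₁ℓη)·φ_ℓ(z₁+ε₁η, z₂+ε₂η) = θ₁(z₁+ε₁ε₂z₂+2ε₁(ℓ+1)η)·φ_ℓ(z₁,z₂)`. -/
lemma Phi_neg (τ η : ℂ) (n : ℕ) (z : ℂ) : PhiFun τ (-η) n z = PhiFun τ η n z := by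
  unfold PhiFun
  rw [← Finset.prod_range_reflect]
  apply Finset.prod_congr rfl
  intro j hj
  simp only [Finset.mem_range] at hj
  congr 1
  have h : n + 1 - 1 - j = n - j := by omega
  rw [h, Nat.cast_sub (by omega : j ≤ n)]; ring

lemma key (τ η : ℂ) (n : ℕ) (w : ℂ) :
    jTheta 1 (w - (n : ℂ) * η) τ * PhiFun τ η n (w + 2*η)
      = jTheta 1 (w + ((n : ℂ) + 2) * η) τ * PhiFun τ η n w := by
  unfold PhiFun
  have L : ∀ j : ℕ, w + 2*η + (2*(j:ℂ) - n)*η = w + (2*((j+1 : ℕ):ℂ) - n)*η := by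
    intro j; push_cast; ring
  calc jTheta 1 (w - (n : ℂ) * η) τ *
        ∏ j ∈ Finset.range (n+1), jTheta 1 (w + 2*η + (2*(j:ℂ) - n)*η) τ
      = ∏ j ∈ Finset.range (n+2), jTheta 1 (w + (2*(j:ℂ) - n)*η) τ := by
        conv_rhs => rw [Finset.prod_range_succ']
        rw [mul_comm]
        congr 1
        · apply Finset.prod_congr rfl; intro j _; rw [L j]
        · congr 1; push_cast; ring
    _ = _ := by
        rw [Finset.prod_range_succ]
        rw [mul_comm]
        congr 2
        push_cast; ring

lemma key' (τ η : ℂ) (n : ℕ) (w : ℂ) :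
    jTheta 1 (w + (n : ℂ) * η) τ * PhiFun τ η n (w - 2*η)
      = jTheta 1 (w - ((n : ℂ) + 2) * η) τ * PhiFun τ η n w := by
  have h := key τ (-η) n w
  rw [Phi_neg, Phi_neg, show w - (n:ℂ)*(-η) = w + (n:ℂ)*η from by ring,
    show w + 2*(-η) = w - 2*η from by ring,
    show w + ((n:ℂ)+2)*(-η) = w - ((n:ℂ)+2)*η from by ring] at h
  exact h

theorem phi_local_commutation (τ : ℂ) (hτ : 0 < τ.im) (n : ℕ) (η z₁ z₂ ε₁ ε₂ : ℂ)
    (hε₁ : ε₁ = 1 ∨ ε₁ = -1) (hε₂ : ε₂ = 1 ∨ ε₂ = -1) :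
    jTheta 1 (z₁ + ε₁*ε₂*z₂ - ε₁*(n : ℂ)*η) τ * phiFun τ η n (z₁ + ε₁*η) (z₂ + ε₂*η)
      = jTheta 1 (z₁ + ε₁*ε₂*z₂ + ε₁*((n : ℂ) + 2)*η) τ * phiFun τ η n z₁ z₂ := by
  rcases hε₁ with h1 | h1 <;> rcases hε₂ with h2 | h2 <;> subst h1 h2 <;>
    simp only [phiFun]
  · rw [show z₁ + (1:ℂ)*η - (z₂ + 1*η) = z₁ - z₂ from by ring,
      show z₁ + (1:ℂ)*η + (z₂ + 1*η) = z₁ + z₂ + 2*η from by ring,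
      show z₁ + (1:ℂ)*1*z₂ - 1*(n:ℂ)*η = z₁ + z₂ - (n:ℂ)*η from by ring,
      show z₁ + (1:ℂ)*1*z₂ + 1*((n:ℂ)+2)*η = z₁ + z₂ + ((n:ℂ)+2)*η from by ring]
    linear_combination PhiFun τ η n (z₁ - z₂) * key τ η n (z₁ + z₂)
  · rw [show z₁ + (1:ℂ)*η - (z₂ + (-1)*η) = z₁ - z₂ + 2*η from by ring,
      show z₁ + (1:ℂ)*η + (z₂ + (-1)*η) = z₁ + z₂ from by ring,
      show z₁ + (1:ℂ)*(-1)*z₂ - 1*(n:ℂ)*η = z₁ - z₂ - (n:ℂ)*η from by ring,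
      show z₁ + (1:ℂ)*(-1)*z₂ + 1*((n:ℂ)+2)*η = z₁ - z₂ + ((n:ℂ)+2)*η from by ring]
    linear_combination PhiFun τ η n (z₁ + z₂) * key τ η n (z₁ - z₂)
  · rw [show z₁ + (-1:ℂ)*η - (z₂ + 1*η) = z₁ - z₂ - 2*η from by ring,
      show z₁ + (-1:ℂ)*η + (z₂ + 1*η) = z₁ + z₂ from by ring,
      show z₁ + (-1:ℂ)*1*z₂ - (-1)*(n:ℂ)*η = z₁ - z₂ + (n:ℂ)*η from by ring,
      show z₁ + (-1:ℂ)*1*z₂ + (-1)*((n:ℂ)+2)*η = z₁ - z₂ - ((n:ℂ)+2)*η from by ring]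
    linear_combination PhiFun τ η n (z₁ + z₂) * key' τ η n (z₁ - z₂)
  · rw [show z₁ + (-1:ℂ)*η - (z₂ + (-1)*η) = z₁ - z₂ from by ring,
      show z₁ + (-1:ℂ)*η + (z₂ + (-1)*η) = z₁ + z₂ - 2*η from by ring,
      show z₁ + (-1:ℂ)*(-1)*z₂ - (-1)*(n:ℂ)*η = z₁ + z₂ + (n:ℂ)*η from by ring,
      show z₁ + (-1:ℂ)*(-1)*z₂ + (-1)*((n:ℂ)+2)*η = z₁ + z₂ - ((n:ℂ)+2)*η from by ring]
    linear_combination PhiFun τ η n (z₁ - z₂) * key' τ η n (z₁ + z₂)
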